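/- For all permutations π, σ ∈ S_n, |π| + |σ| + |πσ| ≥ 2|π ∨ σ|, where π ∨ σ denotes the join of the partitions of {1,…,n} into orbits of π and of σ, |π| := n − #π for a permutation, and |𝒰| := n − #𝒰 for a partition. -/

import Mathlib

/-- The partition of `{1,…,n}` into orbits (cycles) of a permutation, as a setoid. -/
def orbitSetoid {α : Type*} (π : Equiv.Perm α) : Setoid α where
  r := π.SameCycle
  iseqv := ⟨fun x => Equiv.Perm.SameCycle.refl π x, fun h => h.symm, fun h h' => h.trans h'⟩

/-- The length `|𝒰| := n − #𝒰` of a partition of `{1,…,n}`, where `#𝒰` is the number of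
blocks. -/
noncomputable def pLen {n : ℕ} (V : Setoid (Fin n)) : ℤ :=
  (n : ℤ) - Nat.card (Quotient V)

/-- The length `|π| := n − #π` of a permutation, where `#π` is the number of cycles
(orbits) of `π`. -/
noncomputable def permLen {n : ℕ} (π : Equiv.Perm (Fin n)) : ℤ :=
  (n : ℤ) - Nat.card (Quotient (orbitSetoid π))

open Equiv Equiv.Perm

section Aux

variable {α : Type*}

lemma orbitSetoid_rel {f : Perm α} {x y : α} : (orbitSetoid f) x y ↔ f.SameCycle x y := Iff.rfl

lemma quot_sound' {J : Setoid α} {x y : α} (h : J x y) :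
    Quotient.mk J x = Quotient.mk J y := Quotient.sound h

lemma quot_exact' {J : Setoid α} {x y : α} (h : Quotient.mk J x = Quotient.mk J y) : J x y :=
  Quotient.exact h

/-- A setoid containing the graph of a permutation contains its same-cycle relation. -/
lemma rel_of_graph {J : Setoid α} {f : Perm α} (h : ∀ z, J z (f z)) :
    ∀ {x y : α}, f.SameCycle x y → J x y := by
  have hnat : ∀ (m : ℕ) (x : α), J x ((f ^ m) x) := by
    intro m
    induction m with
    | zero => intro x; simpa using J.refl x
    | succ m ih =>
      intro x
      have h2 : (f ^ (m + 1)) x = (f ^ m) (f x) := by rw [pow_succ, Perm.mul_apply]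
      rw [h2]
      exact J.trans (h x) (ih (f x))
  rintro x y ⟨i, hi⟩
  cases i with
  | ofNat m =>
    have : (f ^ m) x = y := by rw [← hi]; simp [zpow_natCast]
    exact this ▸ hnat m x
  | negSucc m =>
    have h1 : ((f ^ (m + 1) : Perm α))⁻¹ x = y := by
      rw [← hi, zpow_negSucc]
    have h2 : (f ^ (m + 1)) y = x := by rw [← h1]; simp
    exact J.symm (h2 ▸ hnat (m + 1) y)

lemma orbit_mul_le (f g : Perm α) : orbitSetoid (f * g) ≤ orbitSetoid f ⊔ orbitSetoid g := by
  rw [Setoid.le_def]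
  intro x y hxy
  refine rel_of_graph (J := orbitSetoid f ⊔ orbitSetoid g) ?_ hxy
  intro z
  have h1 : (orbitSetoid f ⊔ orbitSetoid g) z (g z) :=
    Setoid.le_def.mp le_sup_right (orbitSetoid_rel.mpr ⟨1, by simp⟩)
  have h2 : (orbitSetoid f ⊔ orbitSetoid g) (g z) (f (g z)) :=
    Setoid.le_def.mp le_sup_left (orbitSetoid_rel.mpr ⟨1, by simp⟩)
  exact (orbitSetoid f ⊔ orbitSetoid g).trans h1 (by simpa [Perm.mul_apply] using h2)

lemma swap_zpow [DecidableEq α] (a b : α) (i : ℤ) :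
    (swap a b) ^ i = 1 ∨ (swap a b) ^ i = swap a b := by
  induction i using Int.induction_on with
  | zero => left; rfl
  | succ k ih =>
    rcases ih with h | h
    · right; rw [zpow_add_one, h, one_mul]
    · left; rw [zpow_add_one, h, swap_mul_self]
  | pred k ih =>
    rcases ih with h | h
    · right; rw [zpow_sub_one, h, one_mul, swap_inv]
    · left; rw [zpow_sub_one, h, swap_inv, swap_mul_self]

lemma orbit_swap_rel [DecidableEq α] {a b x y : α} :
    (orbitSetoid (swap a b)) x y ↔ x = y ∨ (x = a ∧ y = b) ∨ (x = b ∧ y = a) := by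
  constructor
  · rintro ⟨i, hi⟩
    rcases swap_zpow a b i with h | h <;> rw [h] at hi
    · left; simpa using hi
    · rcases eq_or_ne x a with rfl | hxa
      · right; left; exact ⟨rfl, by rw [← hi, swap_apply_left]⟩
      rcases eq_or_ne x b with rfl | hxb
      · right; right; exact ⟨rfl, by rw [← hi, swap_apply_right]⟩
      · left; rwa [swap_apply_of_ne_of_ne hxa hxb] at hi
  · rintro (rfl | ⟨rfl, rfl⟩ | ⟨rfl, rfl⟩)
    · exact orbitSetoid_rel.mpr Equiv.Perm.SameCycle.rfl
    · exact orbitSetoid_rel.mpr ⟨1, by simp⟩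
    · exact orbitSetoid_rel.mpr ⟨1, by simp⟩

lemma card_quot_le_of_le [Finite α] {J K : Setoid α} (h : J ≤ K) :
    Nat.card (Quotient K) ≤ Nat.card (Quotient J) := by
  apply Nat.card_le_card_of_surjective
    (Quotient.lift (Quotient.mk K) fun x y hxy => Quotient.sound (h hxy))
  intro q
  obtain ⟨x, rfl⟩ := Quotient.exists_rep q
  exact ⟨Quotient.mk J x, rfl⟩

lemma card_quotient_merge [Finite α] (J K : Setoid α) {a b : α} (hab : ¬ J a b)
    (hK : ∀ x y, K x y ↔ J x y ∨ (J x a ∧ J b y) ∨ (J x b ∧ J a y)) :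
    Nat.card (Quotient K) + 1 = Nat.card (Quotient J) := by
  classical
  have e : Quotient K ≃ {c : Quotient J // c ≠ Quotient.mk J b} := by
    refine
      { toFun := Quotient.lift
          (fun x => if h : J x b then
              ⟨Quotient.mk J a, fun he => hab (quot_exact' he)⟩
            else ⟨Quotient.mk J x, fun he => h (quot_exact' he)⟩) ?_
        invFun := fun c => Quotient.lift (fun x => Quotient.mk K x)
          (fun x y hxy => quot_sound' ((hK x y).mpr (Or.inl hxy))) c.1
        left_inv := ?_
        right_inv := ?_ }
    · intro x y hxy
      rcases (hK x y).mp hxy with h | ⟨h1, h2⟩ | ⟨h1, h2⟩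
      · by_cases hxb : J x b
        · rw [dif_pos hxb, dif_pos (show J y b from J.trans (J.symm h) hxb)]
        · rw [dif_neg hxb, dif_neg (show ¬ J y b from fun hyb => hxb (J.trans h hyb))]
          exact Subtype.ext (quot_sound' h)
      · have hxb : ¬ J x b := fun hxb => hab (J.trans (J.symm h1) hxb)
        have hyb : J y b := J.symm h2
        rw [dif_neg hxb, dif_pos hyb]
        exact Subtype.ext (quot_sound' h1)
      · have hxb : J x b := h1
        have hyb : ¬ J y b := fun hyb => hab (J.trans h2 hyb)
        rw [dif_pos hxb, dif_neg hyb]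
        exact Subtype.ext (quot_sound' h2)
    · intro q
      obtain ⟨x, rfl⟩ := Quotient.exists_rep q
      by_cases hxb : J x b
      · simp only [Quotient.lift_mk, dif_pos hxb]
        exact quot_sound' ((hK a x).mpr (Or.inr (Or.inl ⟨(J.refl a : J a a), (J.symm hxb : J b x)⟩)))
      · simp only [Quotient.lift_mk, dif_neg hxb]
    · rintro ⟨c, hc⟩
      obtain ⟨x, rfl⟩ := Quotient.exists_rep c
      have hxb : ¬ J x b := fun h => hc (quot_sound' h)
      simp only [Quotient.lift_mk, dif_neg hxb]
  rw [Nat.card_congr e]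
  haveI : Fintype (Quotient J) := Fintype.ofFinite _
  rw [Nat.card_eq_fintype_card, Nat.card_eq_fintype_card]
  have h1 : Fintype.card {c : Quotient J // c ≠ Quotient.mk J b}
      = Fintype.card (Quotient J) - Fintype.card {c : Quotient J // c = Quotient.mk J b} :=
    Fintype.card_subtype_compl _
  rw [h1, Fintype.card_subtype_eq]
  have h2 : 0 < Fintype.card (Quotient J) := Fintype.card_pos_iff.mpr ⟨Quotient.mk J b⟩
  omega

/-- The explicit equivalence relation obtained from `J` by merging the classes of `a`, `b`. -/
def mergeSetoid (J : Setoid α) (a b : α) : Setoid α where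
  r x y := J x y ∨ (J x a ∧ J b y) ∨ (J x b ∧ J a y)
  iseqv := by
    refine ⟨fun x => Or.inl (J.refl x), ?_, ?_⟩
    · rintro x y (h | ⟨h1, h2⟩ | ⟨h1, h2⟩)
      · exact Or.inl (J.symm h)
      · exact Or.inr (Or.inr ⟨J.symm h2, J.symm h1⟩)
      · exact Or.inr (Or.inl ⟨J.symm h2, J.symm h1⟩)
    · rintro x y z (h | ⟨h1, h2⟩ | ⟨h1, h2⟩) (h' | ⟨h1', h2'⟩ | ⟨h1', h2'⟩)
      · exact Or.inl (J.trans h h')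
      · exact Or.inr (Or.inl ⟨J.trans h h1', h2'⟩)
      · exact Or.inr (Or.inr ⟨J.trans h h1', h2'⟩)
      · exact Or.inr (Or.inl ⟨h1, J.trans h2 h'⟩)
      · exact Or.inl (J.trans h1 (J.trans (J.symm (J.trans h2 h1')) h2'))
      · exact Or.inl (J.trans h1 h2')
      · exact Or.inr (Or.inr ⟨h1, J.trans h2 h'⟩)
      · exact Or.inl (J.trans h1 h2')
      · exact Or.inl (J.trans h1 (J.trans (J.symm (J.trans h2 h1')) h2'))

lemma mergeSetoid_rel {J : Setoid α} {a b x y : α} :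
    (mergeSetoid J a b) x y ↔ J x y ∨ (J x a ∧ J b y) ∨ (J x b ∧ J a y) := Iff.rfl

lemma card_quotient_sup_pair [Finite α] (J P : Setoid α) {a b : α} (hab : ¬ J a b)
    (hP : ∀ x y, P x y ↔ x = y ∨ (x = a ∧ y = b) ∨ (x = b ∧ y = a)) :
    Nat.card (Quotient (J ⊔ P)) + 1 = Nat.card (Quotient J) := by
  refine card_quotient_merge J (J ⊔ P) hab ?_
  intro x y
  constructor
  · intro hxy
    have hJle : J ≤ mergeSetoid J a b := Setoid.le_def.mpr fun h => Or.inl h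
    have hPle : P ≤ mergeSetoid J a b := by
      rw [Setoid.le_def]
      intro x y hp
      rcases (hP x y).mp hp with rfl | ⟨rfl, rfl⟩ | ⟨rfl, rfl⟩
      · exact Or.inl (J.refl x)
      · exact Or.inr (Or.inl ⟨J.refl _, J.refl _⟩)
      · exact Or.inr (Or.inr ⟨J.refl _, J.refl _⟩)
    exact Setoid.le_def.mp (sup_le hJle hPle) hxy
  · rintro (h | ⟨h1, h2⟩ | ⟨h1, h2⟩)
    · exact Setoid.le_def.mp le_sup_left h
    · have hP1 : (J ⊔ P) a b := Setoid.le_def.mp le_sup_right ((hP a b).mpr (Or.inr (Or.inl ⟨rfl, rfl⟩)))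
      exact (J ⊔ P).trans (Setoid.le_def.mp le_sup_left h1)
        ((J ⊔ P).trans hP1 (Setoid.le_def.mp le_sup_left h2))
    · have hP1 : (J ⊔ P) b a := Setoid.le_def.mp le_sup_right ((hP b a).mpr (Or.inr (Or.inr ⟨rfl, rfl⟩)))
      exact (J ⊔ P).trans (Setoid.le_def.mp le_sup_left h1)
        ((J ⊔ P).trans hP1 (Setoid.le_def.mp le_sup_left h2))

end Aux

section PermFacts

variable {α : Type*} [Finite α] [DecidableEq α]

lemma sameCycle_mul_swap {ρ : Perm α} {a b : α} (h : ¬ ρ.SameCycle a b) :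
    (ρ * swap a b).SameCycle b a := by
  classical
  have hex : ∃ m, 0 < m ∧ (ρ ^ m) a = a :=
    ⟨orderOf ρ, orderOf_pos ρ, by rw [pow_orderOf_eq_one]; rfl⟩
  obtain ⟨hm0, hma⟩ := Nat.find_spec hex
  set m := Nat.find hex with hm_def
  have hmin : ∀ k, 0 < k → k < m → (ρ ^ k) a ≠ a := fun k hk1 hk2 he =>
    Nat.find_min hex hk2 ⟨hk1, he⟩
  have hnb : ∀ k : ℕ, (ρ ^ k) a ≠ b := fun k he => h ⟨(k : ℤ), by rw [zpow_natCast, he]⟩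
  have key : ∀ k, 1 ≤ k → k ≤ m → ((ρ * swap a b) ^ k) b = (ρ ^ k) a := by
    intro k
    induction k with
    | zero => intro h1 _; exact absurd h1 (by omega)
    | succ k ih =>
      intro _ hk
      rcases Nat.eq_zero_or_pos k with rfl | hk0
      · simp [Perm.mul_apply, swap_apply_right]
      · have hkm : k < m := lt_of_lt_of_le (Nat.lt_succ_self k) hk
        have hprev := ih hk0 (le_of_lt hkm)
        have hne1 : (ρ ^ k) a ≠ a := hmin k hk0 hkm
        have hne2 : (ρ ^ k) a ≠ b := hnb k
        rw [pow_succ', Perm.mul_apply, hprev, pow_succ', Perm.mul_apply, Perm.mul_apply,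
          swap_apply_of_ne_of_ne hne1 hne2]
  exact ⟨(m : ℤ), by rw [zpow_natCast, key m hm0 le_rfl, hma]⟩

lemma orbit_mul_swap_eq {ρ : Perm α} {a b : α} (h : ¬ ρ.SameCycle a b) :
    orbitSetoid (ρ * swap a b) = orbitSetoid ρ ⊔ orbitSetoid (swap a b) := by
  have hba := sameCycle_mul_swap h
  refine le_antisymm (orbit_mul_le _ _) (sup_le ?_ ?_)
  · rw [Setoid.le_def]
    intro x y hxy
    refine rel_of_graph (J := orbitSetoid (ρ * swap a b)) ?_ hxy
    intro z
    rcases eq_or_ne z a with hza | hza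
    · rw [hza]
      have h1 : (ρ * swap a b) b = ρ a := by simp [Perm.mul_apply, swap_apply_right]
      exact orbitSetoid_rel.mpr (hba.symm.trans ⟨1, by simp [h1]⟩)
    rcases eq_or_ne z b with hzb | hzb
    · rw [hzb]
      have h1 : (ρ * swap a b) a = ρ b := by simp [Perm.mul_apply, swap_apply_left]
      exact orbitSetoid_rel.mpr (hba.trans ⟨1, by simp [h1]⟩)
    · exact orbitSetoid_rel.mpr ⟨1, by simp [Perm.mul_apply, swap_apply_of_ne_of_ne hza hzb]⟩
  · rw [Setoid.le_def]
    intro x y hxy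
    rcases orbit_swap_rel.mp hxy with rfl | ⟨rfl, rfl⟩ | ⟨rfl, rfl⟩
    · exact orbitSetoid_rel.mpr Equiv.Perm.SameCycle.rfl
    · exact orbitSetoid_rel.mpr hba.symm
    · exact orbitSetoid_rel.mpr hba

lemma card_orbit_mul_swap {ρ : Perm α} {a b : α} (h : ¬ ρ.SameCycle a b) :
    Nat.card (Quotient (orbitSetoid (ρ * swap a b))) + 1
      = Nat.card (Quotient (orbitSetoid ρ)) := by
  rw [orbit_mul_swap_eq h]
  exact card_quotient_sup_pair _ _ (show ¬ (orbitSetoid ρ) a b from h)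
    (fun x y => orbit_swap_rel)

lemma card_orbit_mul_swap_ge (ρ : Perm α) (a b : α) :
    Nat.card (Quotient (orbitSetoid ρ))
      ≤ Nat.card (Quotient (orbitSetoid (ρ * swap a b))) + 1 := by
  have h1 : Nat.card (Quotient (orbitSetoid ρ ⊔ orbitSetoid (swap a b)))
      ≤ Nat.card (Quotient (orbitSetoid (ρ * swap a b))) :=
    card_quot_le_of_le (orbit_mul_le ρ (swap a b))
  by_cases h : ρ.SameCycle a b
  · have hle : orbitSetoid (swap a b) ≤ orbitSetoid ρ := by
      rw [Setoid.le_def]; intro x y hxy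
      rcases orbit_swap_rel.mp hxy with rfl | ⟨rfl, rfl⟩ | ⟨rfl, rfl⟩
      · exact orbitSetoid_rel.mpr Equiv.Perm.SameCycle.rfl
      · exact orbitSetoid_rel.mpr h
      · exact orbitSetoid_rel.mpr h.symm
    rw [sup_eq_left.mpr hle] at h1
    omega
  · have h2 := card_quotient_sup_pair (orbitSetoid ρ) (orbitSetoid (swap a b))
      (show ¬ (orbitSetoid ρ) a b from h) (fun x y => orbit_swap_rel)
    omega

end PermFacts

section FinFacts

variable {n : ℕ}

lemma card_quot_le (J : Setoid (Fin n)) : Nat.card (Quotient J) ≤ n := by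
  have := Nat.card_le_card_of_surjective (Quotient.mk J)
    (fun q => Quotient.exists_rep q)
  simpa using this

lemma card_orbit_one : Nat.card (Quotient (orbitSetoid (1 : Perm (Fin n)))) = n := by
  have e : Quotient (orbitSetoid (1 : Perm (Fin n))) ≃ Fin n :=
    { toFun := Quotient.lift id (fun x y h => Equiv.Perm.sameCycle_one.mp h)
      invFun := Quotient.mk _
      left_inv := by
        intro q; obtain ⟨x, rfl⟩ := Quotient.exists_rep q; rfl
      right_inv := fun x => rfl }
  rw [Nat.card_congr e]
  simp

lemma orbit_one_eq_bot : orbitSetoid (1 : Perm (Fin n)) = ⊥ := by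
  apply Setoid.ext
  intro x y
  rw [orbitSetoid_rel, Equiv.Perm.sameCycle_one]
  simp [Setoid.bot_def]

end FinFacts

section Main

variable {n : ℕ}

lemma permLen_base (π : Perm (Fin n)) :
    permLen π + permLen (1 : Perm (Fin n)) + permLen (π * 1) ≥
      2 * pLen (orbitSetoid π ⊔ orbitSetoid (1 : Perm (Fin n))) := by
  rw [mul_one, orbit_one_eq_bot, sup_bot_eq]
  simp only [permLen, pLen, card_orbit_one]
  omega

lemma card_succ_of_ne_one {σ : Perm (Fin n)} (hσ : σ ≠ 1) :
    ∃ a : Fin n, σ a ≠ a ∧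
      Nat.card (Quotient (orbitSetoid σ)) + 1
        = Nat.card (Quotient (orbitSetoid (σ * swap a (σ a)))) := by
  obtain ⟨a, ha⟩ : ∃ a, σ a ≠ a := by
    by_contra hc
    push_neg at hc
    exact hσ (Equiv.ext fun x => (hc x).trans (Perm.one_apply x).symm)
  have hfix : (σ * swap a (σ a)) (σ a) = σ a := by
    rw [Perm.mul_apply, swap_apply_right]
  have hnc : ¬ (σ * swap a (σ a)).SameCycle a (σ a) := fun hsc =>
    ha (hsc.symm.eq_of_left hfix)
  have hσ'' : (σ * swap a (σ a)) * swap a (σ a) = σ := by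
    rw [mul_assoc, swap_mul_self, mul_one]
  have hcard := card_orbit_mul_swap hnc
  rw [hσ''] at hcard
  exact ⟨a, ha, hcard⟩

theorem permLen_ineq_join' (π σ : Equiv.Perm (Fin n)) :
    permLen π + permLen σ + permLen (π * σ) ≥
      2 * pLen (orbitSetoid π ⊔ orbitSetoid σ) := by
  have H : ∀ (k : ℕ) (σ : Perm (Fin n)),
      n - Nat.card (Quotient (orbitSetoid σ)) ≤ k →
      permLen π + permLen σ + permLen (π * σ) ≥
        2 * pLen (orbitSetoid π ⊔ orbitSetoid σ) := by
    intro k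
    induction k with
    | zero =>
      intro σ hk
      by_cases hσ1 : σ = 1
      · subst hσ1; exact permLen_base π
      · exfalso
        obtain ⟨a, ha, hcard⟩ := card_succ_of_ne_one hσ1
        have hle := card_quot_le (orbitSetoid (σ * swap a (σ a)))
        omega
    | succ k ih =>
      intro σ hk
      by_cases hσ1 : σ = 1
      · subst hσ1; exact permLen_base π
      obtain ⟨a, ha, hcard⟩ := card_succ_of_ne_one hσ1
      have hab : σ.SameCycle a (σ a) := ⟨1, by simp⟩
      have hστ : (σ * swap a (σ a)) * swap a (σ a) = σ := by
        rw [mul_assoc, swap_mul_self, mul_one]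
      have hτσ : orbitSetoid (swap a (σ a)) ≤ orbitSetoid σ := by
        rw [Setoid.le_def]; intro x y hxy
        rcases orbit_swap_rel.mp hxy with hh | ⟨hh1, hh2⟩ | ⟨hh1, hh2⟩
        · rw [hh]
        · rw [hh1, hh2]; exact orbitSetoid_rel.mpr hab
        · rw [hh1, hh2]; exact orbitSetoid_rel.mpr hab.symm
      have hJ : orbitSetoid π ⊔ orbitSetoid σ
          = (orbitSetoid π ⊔ orbitSetoid (σ * swap a (σ a))) ⊔ orbitSetoid (swap a (σ a)) := by
        apply le_antisymm
        · refine sup_le (le_trans le_sup_left le_sup_left) ?_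
          have h1 := orbit_mul_le (σ * swap a (σ a)) (swap a (σ a))
          rw [hστ] at h1
          exact h1.trans (sup_le_sup_right le_sup_right _)
        · refine sup_le (sup_le le_sup_left ?_) (hτσ.trans le_sup_right)
          exact (orbit_mul_le σ (swap a (σ a))).trans ((sup_le le_rfl hτσ).trans le_sup_right)
      have hπσ : (π * (σ * swap a (σ a))) * swap a (σ a) = π * σ := by
        rw [mul_assoc, hστ]
      have hcle := card_quot_le (orbitSetoid (σ * swap a (σ a)))
      have hIH := ih (σ * swap a (σ a)) (by omega)
      by_cases hrel : (orbitSetoid π ⊔ orbitSetoid (σ * swap a (σ a))) a (σ a)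
      · have hJA : orbitSetoid π ⊔ orbitSetoid σ
            = orbitSetoid π ⊔ orbitSetoid (σ * swap a (σ a)) := by
          rw [hJ]
          apply sup_eq_left.mpr
          rw [Setoid.le_def]; intro x y hxy
          rcases orbit_swap_rel.mp hxy with hh | ⟨hh1, hh2⟩ | ⟨hh1, hh2⟩
          · rw [hh]
          · rw [hh1, hh2]; exact hrel
          · rw [hh1, hh2]
            exact (orbitSetoid π ⊔ orbitSetoid (σ * swap a (σ a))).symm hrel
        have hge := card_orbit_mul_swap_ge (π * σ) a (σ a)
        rw [mul_assoc] at hge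
        rw [hJA]
        simp only [permLen, pLen, ge_iff_le] at hIH ⊢
        omega
      · have hnc2 : ¬ (π * (σ * swap a (σ a))).SameCycle a (σ a) := fun hsc =>
          hrel (Setoid.le_def.mp (orbit_mul_le π (σ * swap a (σ a)))
            (orbitSetoid_rel.mpr hsc))
        have hcard2 := card_orbit_mul_swap hnc2
        rw [hπσ] at hcard2
        have hcard3 := card_quotient_sup_pair
          (orbitSetoid π ⊔ orbitSetoid (σ * swap a (σ a))) (orbitSetoid (swap a (σ a)))
          hrel (fun x y => orbit_swap_rel)
        rw [hJ]
        simp only [permLen, pLen, ge_iff_le] at hIH ⊢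
        omega
  exact H _ σ le_rfl

end Main

/-- For all permutations `π, σ ∈ S_n`: `|π| + |σ| + |πσ| ≥ 2|π ∨ σ|`, where `π ∨ σ` is
the join of the orbit partitions of `π` and of `σ`. -/
theorem permLen_ineq_join {n : ℕ} (π σ : Equiv.Perm (Fin n)) :
    permLen π + permLen σ + permLen (π * σ) ≥
      2 * pLen (orbitSetoid π ⊔ orbitSetoid σ) := by
  exact permLen_ineq_join' π σ
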